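/- arXiv:2301.07876 — 3 statements merged into one kernel-verified Lean document; each statement's English description precedes it below -/
import Mathlib

section
/- Let (A★,B★) satisfy Assumption (LQR) and Assumption (bound), let P★ be a positive-definite matrix satisfying P★ = 𝓡_{A★,B★}(P★), and let (Â,B̂) satisfy ‖Â − A★‖ ≤ ε_m and ‖B̂ − B★‖ ≤ ε_m for some ε_m ≥ 0. Let F ⪰ 0 satisfy ‖F − P★‖ ≤ ε with Υ★ ≥ ε, and set K := 𝓚_{Â,B̂}(F) and K★ := 𝓚_{A★,B★}(P★). Then ‖K − K★‖ ≤ Υ★² (√‖P★‖ + 1)(3ε_m + 4ε)/σ_min(R). -/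
open Matrix

/-- Spectral norm (operator 2-norm) of a real matrix. -/
noncomputable def spNorm {p q : ℕ} (M : Matrix (Fin p) (Fin q) ℝ) : ℝ :=
  ‖LinearMap.toContinuousLinearMap (Matrix.toEuclideanLin M)‖

/-- The spectral radius of a real square matrix is `< 1`. -/
def StabMat {n : ℕ} (M : Matrix (Fin n) (Fin n) ℝ) : Prop :=
  ∀ μ ∈ spectrum ℂ (M.map (algebraMap ℝ ℂ)), ‖μ‖ < 1

/-- `(A, B)` is stabilizable. -/
def Stabilizable {n m : ℕ} (A : Matrix (Fin n) (Fin n) ℝ)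
    (B : Matrix (Fin n) (Fin m) ℝ) : Prop :=
  ∃ K : Matrix (Fin m) (Fin n) ℝ, StabMat (A - B * K)

/-- Smallest (real) eigenvalue: `σ_min` for symmetric matrices. -/
noncomputable def minEig {k : ℕ} (M : Matrix (Fin k) (Fin k) ℝ) : ℝ :=
  sInf (spectrum ℝ M)

/-- Largest (real) eigenvalue: `σ_max` for symmetric matrices. -/
noncomputable def maxEig {k : ℕ} (M : Matrix (Fin k) (Fin k) ℝ) : ℝ :=
  sSup (spectrum ℝ M)

/-- `S_B = B R⁻¹ Bᵀ`. -/
noncomputable def sMat {n m : ℕ} (R : Matrix (Fin m) (Fin m) ℝ)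
    (B : Matrix (Fin n) (Fin m) ℝ) : Matrix (Fin n) (Fin n) ℝ :=
  B * R⁻¹ * Bᵀ

/-- Riccati map `𝓡_{A,B}(P) = Aᵀ P (I + S_B P)⁻¹ A + Q`. -/
noncomputable def ric {n m : ℕ} (R : Matrix (Fin m) (Fin m) ℝ)
    (Q A : Matrix (Fin n) (Fin n) ℝ) (B : Matrix (Fin n) (Fin m) ℝ)
    (P : Matrix (Fin n) (Fin n) ℝ) : Matrix (Fin n) (Fin n) ℝ :=
  Aᵀ * P * (1 + sMat R B * P)⁻¹ * A + Q

/-- Riccati iterates: `𝓡^{(0)} = id`, `𝓡^{(i+1)} = 𝓡 ∘ 𝓡^{(i)}`. -/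
noncomputable def ricIter {n m : ℕ} (R : Matrix (Fin m) (Fin m) ℝ)
    (Q A : Matrix (Fin n) (Fin n) ℝ) (B : Matrix (Fin n) (Fin m) ℝ) :
    ℕ → Matrix (Fin n) (Fin n) ℝ → Matrix (Fin n) (Fin n) ℝ
  | 0, P => P
  | i + 1, P => ric R Q A B (ricIter R Q A B i P)

/-- Gain `𝓚_{A,B}(P) = (R + Bᵀ P B)⁻¹ Bᵀ P A`. -/
noncomputable def gain {n m : ℕ} (R : Matrix (Fin m) (Fin m) ℝ)
    (A : Matrix (Fin n) (Fin n) ℝ) (B : Matrix (Fin n) (Fin m) ℝ)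
    (P : Matrix (Fin n) (Fin n) ℝ) : Matrix (Fin m) (Fin n) ℝ :=
  (R + Bᵀ * P * B)⁻¹ * (Bᵀ * P * A)

/-- Closed loop matrix `𝓛_{A,B}(P) = (I + S_B P)⁻¹ A`. -/
noncomputable def clMat {n m : ℕ} (R : Matrix (Fin m) (Fin m) ℝ)
    (A : Matrix (Fin n) (Fin n) ℝ) (B : Matrix (Fin n) (Fin m) ℝ)
    (P : Matrix (Fin n) (Fin n) ℝ) : Matrix (Fin n) (Fin n) ℝ :=
  (1 + sMat R B * P)⁻¹ * A

/-- State transition matrix `Φ^{(j:i)}_{A,B}(P)`. -/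
noncomputable def phiMat {n m : ℕ} (R : Matrix (Fin m) (Fin m) ℝ)
    (Q A : Matrix (Fin n) (Fin n) ℝ) (B : Matrix (Fin n) (Fin m) ℝ)
    (P : Matrix (Fin n) (Fin n) ℝ) (j i : ℕ) : Matrix (Fin n) (Fin n) ℝ :=
  ((List.range (i - j)).map (fun k => clMat R A B (ricIter R Q A B (j + k) P))).prod

/-- Perturbed closed loop matrix `𝓛̄(P) = W(P)(H(P) + 𝓛_{A★,B★}(P))`. -/
noncomputable def lbarMat {n m : ℕ} (R : Matrix (Fin m) (Fin m) ℝ)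
    (As : Matrix (Fin n) (Fin n) ℝ) (Bs : Matrix (Fin n) (Fin m) ℝ)
    (Ah : Matrix (Fin n) (Fin n) ℝ) (Bh : Matrix (Fin n) (Fin m) ℝ)
    (P : Matrix (Fin n) (Fin n) ℝ) : Matrix (Fin n) (Fin n) ℝ :=
  (1 + (sMat R Bs - sMat R Bh) * P) *
    ((1 + sMat R Bs * P)⁻¹ * (Ah - As) + clMat R As Bs P)

/-- Perturbed state transition matrix `Φ̄^{(j:i)}(P)`. -/
noncomputable def phibarMat {n m : ℕ} (R : Matrix (Fin m) (Fin m) ℝ)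
    (Q As : Matrix (Fin n) (Fin n) ℝ) (Bs : Matrix (Fin n) (Fin m) ℝ)
    (Ah : Matrix (Fin n) (Fin n) ℝ) (Bh : Matrix (Fin n) (Fin m) ℝ)
    (P : Matrix (Fin n) (Fin n) ℝ) (j i : ℕ) : Matrix (Fin n) (Fin n) ℝ :=
  ((List.range (i - j)).map
    (fun k => lbarMat R As Bs Ah Bh (ricIter R Q As Bs (j + k) P))).prod

/-- The map `𝓜(P₁,P₂)`. -/
noncomputable def mMat {n m : ℕ} (R : Matrix (Fin m) (Fin m) ℝ)
    (As : Matrix (Fin n) (Fin n) ℝ) (Bs : Matrix (Fin n) (Fin m) ℝ)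
    (Ah : Matrix (Fin n) (Fin n) ℝ) (Bh : Matrix (Fin n) (Fin m) ℝ)
    (P1 P2 : Matrix (Fin n) (Fin n) ℝ) : Matrix (Fin n) (Fin n) ℝ :=
  Ahᵀ * P2 * (1 + sMat R Bs * P2)⁻¹ * Ah - Asᵀ * P2 * (1 + sMat R Bs * P2)⁻¹ * As
    + Ahᵀ * (1 + P1 * sMat R Bh)⁻¹ * P2 * (sMat R Bs - sMat R Bh) * P2 *
        (1 + sMat R Bs * P2)⁻¹ * Ah

/-- `β★ = σ_max(P★)/σ_min(Q)`. -/
noncomputable def betaStar {n : ℕ} (Q Pstar : Matrix (Fin n) (Fin n) ℝ) : ℝ :=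
  maxEig Pstar / minEig Q

/-- `ψ(ε_m, ε_p)`. -/
noncomputable def psiF (U b em ep : ℝ) : ℝ :=
  em * (1 + (em + 2 * U) ^ 2 * (b * ep + U))

/-- `γ₁(ε_m, ε_p)`. -/
noncomputable def gamma1F (U b em ep : ℝ) : ℝ :=
  Real.sqrt b * psiF U b em ep + Real.sqrt (1 - b⁻¹)

/-- `α_{ε_m} = (1 − 8‖P★‖² ε_m)^{−1/2}`, with `p = ‖P★‖`. -/
noncomputable def alphaF (p em : ℝ) : ℝ :=
  (1 - 8 * p ^ 2 * em) ^ (-(1 / 2) : ℝ)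

/-- `γ₂(ε_m)`. -/
noncomputable def gamma2F (p b em : ℝ) : ℝ :=
  Real.sqrt (1 - (alphaF p em)⁻¹ * b⁻¹)

/-- `ψ̃(ε_m)`. -/
noncomputable def psitF (U em : ℝ) : ℝ :=
  (em ^ 2 + 2 * U * em) * (U + (em + U) ^ 2 * U ^ 2)

/-- `Ê(ε_m, ε_p, i)`. -/
noncomputable def ehatF (p U b em ep : ℝ) (i : ℕ) : ℝ :=
  Real.sqrt (alphaF p em) * b *
    ((gamma1F U b em ep * gamma2F p b em) ^ i * ep +
      psitF U em * ((1 - (gamma1F U b em ep * gamma2F p b em) ^ i) /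
        (1 - gamma1F U b em ep * gamma2F p b em)))

/-- `g(N, ε_m, ε_p)` with `r = σ_max(R)`, `p = ‖P★‖`, `b = β★`. -/
noncomputable def gF (m : ℕ) (σw r U p b em ep : ℝ) (N : ℕ) : ℝ :=
  128 * (m : ℝ) * σw ^ 2 * (r + U ^ 3) * U ^ 4 * p ^ 2 *
    (em + ehatF p U b em ep (N - 1)) ^ 2

/-- The Lyapunov equation `Σ = (A−BK) Σ (A−BK)ᵀ + σ_w² I`. -/
def LyapEq {n m : ℕ} (As : Matrix (Fin n) (Fin n) ℝ) (Bs : Matrix (Fin n) (Fin m) ℝ)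
    (K : Matrix (Fin m) (Fin n) ℝ) (σw : ℝ) (S : Matrix (Fin n) (Fin n) ℝ) : Prop :=
  S = (As - Bs * K) * S * (As - Bs * K)ᵀ + σw ^ 2 • (1 : Matrix (Fin n) (Fin n) ℝ)

/-- `J_K = tr((Q + Kᵀ R K) Σ)`. -/
noncomputable def lqCost {n m : ℕ} (R : Matrix (Fin m) (Fin m) ℝ)
    (Q : Matrix (Fin n) (Fin n) ℝ) (K : Matrix (Fin m) (Fin n) ℝ)
    (S : Matrix (Fin n) (Fin n) ℝ) : ℝ :=
  ((Q + Kᵀ * R * K) * S).trace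

section Aux

namespace SpAux

noncomputable def eucl {q : ℕ} (v : Fin q → ℝ) : EuclideanSpace ℝ (Fin q) :=
  (WithLp.equiv 2 _).symm v

lemma tapply {p q : ℕ} (M : Matrix (Fin p) (Fin q) ℝ) (v : Fin q → ℝ) :
    (LinearMap.toContinuousLinearMap (Matrix.toEuclideanLin M)) (eucl v) = eucl (M *ᵥ v) := by
  simp [eucl, Matrix.toEuclideanLin_apply]

lemma inner_eucl {q : ℕ} (v w : Fin q → ℝ) :
    (inner ℝ (eucl v) (eucl w) : ℝ) = v ⬝ᵥ w := by
  simp [PiLp.inner_apply, eucl, dotProduct, mul_comm]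

lemma norm_eucl_sq {q : ℕ} (v : Fin q → ℝ) : ‖eucl v‖ ^ 2 = v ⬝ᵥ v := by
  rw [← inner_eucl v v, real_inner_self_eq_norm_sq]

lemma spNorm_nonneg {p q : ℕ} (M : Matrix (Fin p) (Fin q) ℝ) : 0 ≤ spNorm M :=
  norm_nonneg _

lemma norm_mulVec_le {p q : ℕ} (M : Matrix (Fin p) (Fin q) ℝ) (v : Fin q → ℝ) :
    ‖eucl (M *ᵥ v)‖ ≤ spNorm M * ‖eucl v‖ := by
  rw [← tapply]; exact (LinearMap.toContinuousLinearMap (Matrix.toEuclideanLin M)).le_opNorm _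

lemma spNorm_le_of_bound {p q : ℕ} (M : Matrix (Fin p) (Fin q) ℝ) {C : ℝ} (hC : 0 ≤ C)
    (h : ∀ v : Fin q → ℝ, ‖eucl (M *ᵥ v)‖ ≤ C * ‖eucl v‖) : spNorm M ≤ C := by
  apply ContinuousLinearMap.opNorm_le_bound _ hC
  intro x
  have := h ((WithLp.equiv 2 _) x)
  simpa [Matrix.toEuclideanLin_apply, eucl] using this

lemma spNorm_mul_le {p q r : ℕ} (M : Matrix (Fin p) (Fin q) ℝ) (N : Matrix (Fin q) (Fin r) ℝ) :
    spNorm (M * N) ≤ spNorm M * spNorm N := by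
  have h : LinearMap.toContinuousLinearMap (Matrix.toEuclideanLin (M * N)) =
      (LinearMap.toContinuousLinearMap (Matrix.toEuclideanLin M)).comp
        (LinearMap.toContinuousLinearMap (Matrix.toEuclideanLin N)) := by
    ext x
    simp [Matrix.toEuclideanLin_apply, Matrix.mulVec_mulVec]
  rw [spNorm, h]
  exact (LinearMap.toContinuousLinearMap (Matrix.toEuclideanLin M)).opNorm_comp_le _

lemma spNorm_add_le {p q : ℕ} (M N : Matrix (Fin p) (Fin q) ℝ) :
    spNorm (M + N) ≤ spNorm M + spNorm N := by
  have h : LinearMap.toContinuousLinearMap (Matrix.toEuclideanLin (M + N)) =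
      LinearMap.toContinuousLinearMap (Matrix.toEuclideanLin M) +
        LinearMap.toContinuousLinearMap (Matrix.toEuclideanLin N) := by
    ext x; simp [Matrix.toEuclideanLin_apply, Matrix.add_mulVec]
  rw [spNorm, h]; exact norm_add_le _ _

lemma spNorm_neg {p q : ℕ} (M : Matrix (Fin p) (Fin q) ℝ) : spNorm (-M) = spNorm M := by
  have h : LinearMap.toContinuousLinearMap (Matrix.toEuclideanLin (-M)) =
      -LinearMap.toContinuousLinearMap (Matrix.toEuclideanLin M) := by
    ext x; simp [Matrix.toEuclideanLin_apply, Matrix.neg_mulVec]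
  rw [spNorm, h, norm_neg]; rfl

lemma spNorm_sub_le {p q : ℕ} (M N : Matrix (Fin p) (Fin q) ℝ) :
    spNorm (M - N) ≤ spNorm M + spNorm N := by
  rw [sub_eq_add_neg]
  exact (spNorm_add_le M (-N)).trans (by rw [spNorm_neg])

lemma spNorm_transpose {p q : ℕ} (M : Matrix (Fin p) (Fin q) ℝ) :
    spNorm Mᵀ = spNorm M := by
  have h : Mᵀ = Mᴴ := by ext i j; simp [Matrix.conjTranspose]
  rw [spNorm, h, Matrix.toEuclideanLin_conjTranspose_eq_adjoint,
    LinearMap.adjoint_toContinuousLinearMap]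
  exact ContinuousLinearMap.adjoint.norm_map _

lemma conjT_eq_transpose {p q : ℕ} (M : Matrix (Fin p) (Fin q) ℝ) : Mᴴ = Mᵀ := by
  ext i j; simp [Matrix.conjTranspose]

lemma quad_lower {q : ℕ} {M : Matrix (Fin q) (Fin q) ℝ} {c : ℝ}
    (h : (M - c • 1).PosSemidef) (v : Fin q → ℝ) :
    c * ‖eucl v‖ ^ 2 ≤ v ⬝ᵥ (M *ᵥ v) := by
  have h2 := h.dotProduct_mulVec_nonneg v
  simp only [sub_mulVec, dotProduct_sub, smul_mulVec, one_mulVec, star_trivial,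
    dotProduct_smul, smul_eq_mul] at h2
  rw [norm_eucl_sq]
  linarith

lemma mulVec_lower {q : ℕ} {M : Matrix (Fin q) (Fin q) ℝ} {c : ℝ} (hc : 0 ≤ c)
    (h : (M - c • 1).PosSemidef) (v : Fin q → ℝ) :
    c * ‖eucl v‖ ≤ ‖eucl (M *ᵥ v)‖ := by
  have h1 : c * ‖eucl v‖ ^ 2 ≤ v ⬝ᵥ (M *ᵥ v) := quad_lower h v
  have h2 : v ⬝ᵥ (M *ᵥ v) ≤ ‖eucl v‖ * ‖eucl (M *ᵥ v)‖ := by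
    rw [← inner_eucl]
    exact real_inner_le_norm _ _
  nlinarith [norm_nonneg (eucl v), norm_nonneg (eucl (M *ᵥ v))]

lemma smul_one_posDef {q : ℕ} [NeZero q] {c : ℝ} (hc : 0 < c) :
    ((c • 1 : Matrix (Fin q) (Fin q) ℝ)).PosDef := by
  have : (c • 1 : Matrix (Fin q) (Fin q) ℝ) = diagonal (fun _ => c) := by
    ext i j; by_cases h : i = j <;> simp [h, Matrix.one_apply, Matrix.smul_apply]
  rw [this]
  exact posDef_diagonal_iff.mpr fun _ => hc

lemma posDef_of_shift {q : ℕ} [NeZero q] {M : Matrix (Fin q) (Fin q) ℝ} {c : ℝ} (hc : 0 < c)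
    (h : (M - c • 1).PosSemidef) : M.PosDef := by
  have := Matrix.PosDef.posSemidef_add h (smul_one_posDef hc)
  simpa using this

lemma spNorm_inv_le {q : ℕ} [NeZero q] {M : Matrix (Fin q) (Fin q) ℝ} {c : ℝ} (hc : 0 < c)
    (h : (M - c • 1).PosSemidef) : spNorm M⁻¹ ≤ 1 / c := by
  have hpd := posDef_of_shift hc h
  have hdet : IsUnit M.det := isUnit_iff_isUnit_det M |>.1 hpd.isUnit
  apply spNorm_le_of_bound _ (by positivity)
  intro v
  have hcancel : M *ᵥ (M⁻¹ *ᵥ v) = v := by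
    rw [Matrix.mulVec_mulVec, Matrix.mul_nonsing_inv _ hdet, Matrix.one_mulVec]
  have := mulVec_lower hc.le h (M⁻¹ *ᵥ v)
  rw [hcancel] at this
  rw [div_mul_eq_mul_div, le_div_iff₀ hc, mul_comm]
  linarith

lemma spectrum_ge_one {q : ℕ} {R : Matrix (Fin q) (Fin q) ℝ} [NeZero q]
    (hR : (R - 1).PosSemidef) : ∀ μ ∈ spectrum ℝ R, 1 ≤ μ := by
  intro μ hμ
  by_contra hlt
  push_neg at hlt
  rw [spectrum.mem_iff] at hμ
  apply hμ
  have hpd : (R - μ • 1).PosDef := by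
    have h1 : ((1 - μ) • (1 : Matrix (Fin q) (Fin q) ℝ)).PosDef := by
      have : ((1 - μ) • (1 : Matrix (Fin q) (Fin q) ℝ)) = diagonal (fun _ => 1 - μ) := by
        ext i j; by_cases h : i = j <;> simp [h, Matrix.one_apply, Matrix.smul_apply]
      rw [this]; exact posDef_diagonal_iff.mpr fun _ => by linarith
    have := Matrix.PosDef.posSemidef_add hR h1
    have heq : R - 1 + (1 - μ) • (1 : Matrix (Fin q) (Fin q) ℝ) = R - μ • 1 := by
      rw [sub_smul, one_smul]; abel
    rwa [heq] at this
  have : IsUnit (R - μ • 1) := hpd.isUnit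
  have heq : (algebraMap ℝ (Matrix (Fin q) (Fin q) ℝ)) μ - R = -(R - μ • 1) := by
    rw [Algebra.algebraMap_eq_smul_one]; abel
  rw [heq]
  exact this.neg

lemma one_le_minEig {q : ℕ} {R : Matrix (Fin q) (Fin q) ℝ} [NeZero q]
    (hR : (R - 1).PosSemidef) : 1 ≤ minEig R := by
  have hH : R.IsHermitian := by
    have : R = (R - 1) + 1 := by abel
    rw [this]; exact hR.isHermitian.add (Matrix.isHermitian_one)
  have hne : (spectrum ℝ R).Nonempty :=
    ⟨hH.eigenvalues ⟨0, Nat.pos_of_ne_zero (NeZero.ne q)⟩,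
      hH.eigenvalues_mem_spectrum_real _⟩
  exact le_csInf hne (spectrum_ge_one hR)

lemma shifted_psd {q : ℕ} {R : Matrix (Fin q) (Fin q) ℝ} [NeZero q]
    (hR : (R - 1).PosSemidef) : (R - minEig R • 1).PosSemidef := by
  have hH : R.IsHermitian := by
    have : R = (R - 1) + 1 := by abel
    rw [this]; exact hR.isHermitian.add (Matrix.isHermitian_one)
  have hbdd : BddBelow (spectrum ℝ R) := ⟨1, fun μ hμ => spectrum_ge_one hR μ hμ⟩
  have hev : ∀ i, minEig R ≤ hH.eigenvalues i := fun i =>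
    csInf_le hbdd (hH.eigenvalues_mem_spectrum_real i)
  set V : Matrix (Fin q) (Fin q) ℝ := (hH.eigenvectorUnitary : Matrix (Fin q) (Fin q) ℝ)
  have hVU : V * star V = 1 := (Matrix.mem_unitaryGroup_iff).mp hH.eigenvectorUnitary.2
  have hst := hH.spectral_theorem
  have key : R - minEig R • 1 =
      V * diagonal (fun i => hH.eigenvalues i - minEig R) * Vᴴ := by
    have hdiag : diagonal (fun i => hH.eigenvalues i - minEig R) =
        diagonal (RCLike.ofReal ∘ hH.eigenvalues) - minEig R • 1 := by
      ext i j; by_cases h : i = j <;>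
        simp [h, Matrix.one_apply, Matrix.smul_apply, diagonal]
    rw [hdiag, Matrix.mul_sub, Matrix.sub_mul, ← Matrix.star_eq_conjTranspose]
    rw [Unitary.conjStarAlgAut_apply] at hst
    rw [← hst]
    congr 1
    rw [Matrix.mul_smul, Matrix.smul_mul, Matrix.mul_one, hVU]
  rw [key]
  exact (Matrix.PosSemidef.diagonal (fun i => by simpa using hev i)).mul_mul_conjTranspose_same V

lemma canc {n m k : ℕ} (R : Matrix (Fin m) (Fin m) ℝ) (B : Matrix (Fin n) (Fin m) ℝ)
    (P : Matrix (Fin n) (Fin n) ℝ) (w : Matrix (Fin m) (Fin k) ℝ)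
    (hMdet : IsUnit (R + Bᵀ * P * B).det) :
    Bᵀ * (P * (B * ((R + Bᵀ * P * B)⁻¹ * w))) + R * ((R + Bᵀ * P * B)⁻¹ * w) = w := by
  have h0 : (R + Bᵀ * P * B) * ((R + Bᵀ * P * B)⁻¹ * w) = w := by
    rw [← Matrix.mul_assoc, Matrix.mul_nonsing_inv _ hMdet, Matrix.one_mul]
  calc Bᵀ * (P * (B * ((R + Bᵀ * P * B)⁻¹ * w))) + R * ((R + Bᵀ * P * B)⁻¹ * w)
      = (R + Bᵀ * P * B) * ((R + Bᵀ * P * B)⁻¹ * w) := by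
        simp only [Matrix.add_mul, Matrix.mul_assoc]; abel
    _ = w := h0

lemma inv_formula {n m : ℕ} (R : Matrix (Fin m) (Fin m) ℝ) (B : Matrix (Fin n) (Fin m) ℝ)
    (P : Matrix (Fin n) (Fin n) ℝ)
    (hRdet : IsUnit R.det) (hMdet : IsUnit (R + Bᵀ * P * B).det) :
    (1 + sMat R B * P)⁻¹ = 1 - B * ((R + Bᵀ * P * B)⁻¹ * (Bᵀ * P)) := by
  apply Matrix.inv_eq_right_inv
  have hx := canc R B P (Bᵀ * P) hMdet
  have hx' : Bᵀ * (P * (B * ((R + Bᵀ * P * B)⁻¹ * (Bᵀ * P)))) =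
      Bᵀ * P - R * ((R + Bᵀ * P * B)⁻¹ * (Bᵀ * P)) := eq_sub_of_add_eq hx
  have hRinv : ∀ (Z : Matrix (Fin m) (Fin n) ℝ), R⁻¹ * (R * Z) = Z := fun Z => by
    rw [← Matrix.mul_assoc, Matrix.nonsing_inv_mul _ hRdet, Matrix.one_mul]
  calc (1 + sMat R B * P) * (1 - B * ((R + Bᵀ * P * B)⁻¹ * (Bᵀ * P)))
      = 1 + B * (R⁻¹ * (Bᵀ * P)) - B * ((R + Bᵀ * P * B)⁻¹ * (Bᵀ * P))
          - B * (R⁻¹ * (Bᵀ * (P * (B * ((R + Bᵀ * P * B)⁻¹ * (Bᵀ * P)))))) := by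
        simp only [sMat, Matrix.mul_sub, Matrix.add_mul, Matrix.mul_one, Matrix.one_mul,
          Matrix.mul_assoc]
        abel
    _ = 1 := by
        rw [hx', Matrix.mul_sub, hRinv, Matrix.mul_sub]
        abel

set_option maxHeartbeats 2000000 in
lemma lyap_id {n m : ℕ} (A P : Matrix (Fin n) (Fin n) ℝ) (B : Matrix (Fin n) (Fin m) ℝ)
    (R : Matrix (Fin m) (Fin m) ℝ) (hPt : Pᵀ = P) (hRt : Rᵀ = R)
    (hRdet : IsUnit R.det) (hMdet : IsUnit (R + Bᵀ * P * B).det) :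
    Aᵀ * P * (1 + sMat R B * P)⁻¹ * A =
      (A - B * gain R A B P)ᵀ * P * (A - B * gain R A B P) +
        (gain R A B P)ᵀ * R * (gain R A B P) := by
  have hMit : ((R + Bᵀ * P * B)⁻¹)ᵀ = (R + Bᵀ * P * B)⁻¹ := by
    rw [Matrix.transpose_nonsing_inv]
    congr 1
    simp only [Matrix.transpose_add, Matrix.transpose_mul, Matrix.transpose_transpose, hPt, hRt,
      Matrix.mul_assoc]
  have hMit2 : ((R + Bᵀ * (P * B))⁻¹)ᵀ = (R + Bᵀ * (P * B))⁻¹ := by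
    rw [← Matrix.mul_assoc Bᵀ P B]; exact hMit
  have hw := canc R B P (Bᵀ * (P * A)) hMdet
  have h2 := congrArg
    (fun Z : Matrix (Fin m) (Fin n) ℝ => Aᵀ * (P * (B * ((R + Bᵀ * P * B)⁻¹ * Z)))) hw
  simp only [Matrix.mul_add] at h2
  rw [inv_formula R B P hRdet hMdet, gain]
  calc Aᵀ * P * (1 - B * ((R + Bᵀ * P * B)⁻¹ * (Bᵀ * P))) * A
      = Aᵀ * (P * A) - Aᵀ * (P * (B * ((R + Bᵀ * P * B)⁻¹ * (Bᵀ * (P * A))))) := by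
        simp only [Matrix.mul_sub, Matrix.sub_mul, Matrix.mul_one, Matrix.mul_assoc]
    _ = (Aᵀ * (P * A) - Aᵀ * (P * (B * ((R + Bᵀ * P * B)⁻¹ * (Bᵀ * (P * A)))))
          - Aᵀ * (P * (B * ((R + Bᵀ * P * B)⁻¹ * (Bᵀ * (P * A))))))
        + (Aᵀ * (P * (B * ((R + Bᵀ * P * B)⁻¹ *
            (Bᵀ * (P * (B * ((R + Bᵀ * P * B)⁻¹ * (Bᵀ * (P * A)))))))))
          + Aᵀ * (P * (B * ((R + Bᵀ * P * B)⁻¹ *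
            (R * ((R + Bᵀ * P * B)⁻¹ * (Bᵀ * (P * A)))))))) := by
        rw [h2]; abel
    _ = (A - B * ((R + Bᵀ * P * B)⁻¹ * (Bᵀ * P * A)))ᵀ * P *
          (A - B * ((R + Bᵀ * P * B)⁻¹ * (Bᵀ * P * A))) +
        ((R + Bᵀ * P * B)⁻¹ * (Bᵀ * P * A))ᵀ * R *
          ((R + Bᵀ * P * B)⁻¹ * (Bᵀ * P * A)) := by
        simp only [Matrix.transpose_sub, Matrix.transpose_mul, Matrix.transpose_transpose,
          hMit, hMit2, hPt, Matrix.sub_mul, Matrix.mul_sub, Matrix.mul_one, Matrix.one_mul,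
          Matrix.mul_assoc]
        abel


-- ‖K‖ ≤ √(spNorm P) when P - KᵀRK ⪰ 0 and R ⪰ 1
lemma gain_norm_le {n m : ℕ} {K : Matrix (Fin m) (Fin n) ℝ} {P : Matrix (Fin n) (Fin n) ℝ}
    {R : Matrix (Fin m) (Fin m) ℝ} (hR : (R - 1).PosSemidef)
    (hPSD : (P - Kᵀ * R * K).PosSemidef) : spNorm K ≤ Real.sqrt (spNorm P) := by
  apply spNorm_le_of_bound _ (Real.sqrt_nonneg _)
  intro v
  have h1 : ‖eucl (K *ᵥ v)‖ ^ 2 ≤ (K *ᵥ v) ⬝ᵥ (R *ᵥ (K *ᵥ v)) := by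
    have := quad_lower (c := 1) (by rwa [one_smul]) (K *ᵥ v)
    linarith
  have h2 : (K *ᵥ v) ⬝ᵥ (R *ᵥ (K *ᵥ v)) = v ⬝ᵥ ((Kᵀ * R * K) *ᵥ v) := by
    rw [← Matrix.mulVec_mulVec, ← Matrix.mulVec_mulVec, Matrix.dotProduct_mulVec v,
      Matrix.vecMul_transpose]
  have h3 : v ⬝ᵥ ((Kᵀ * R * K) *ᵥ v) ≤ v ⬝ᵥ (P *ᵥ v) := by
    have := hPSD.dotProduct_mulVec_nonneg v
    simp only [sub_mulVec, dotProduct_sub, star_trivial] at this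
    linarith
  have h4 : v ⬝ᵥ (P *ᵥ v) ≤ spNorm P * ‖eucl v‖ ^ 2 := by
    rw [← inner_eucl]
    calc (inner ℝ (eucl v) (eucl (P *ᵥ v)) : ℝ) ≤ ‖eucl v‖ * ‖eucl (P *ᵥ v)‖ :=
          real_inner_le_norm _ _
      _ ≤ ‖eucl v‖ * (spNorm P * ‖eucl v‖) := by
          have := norm_mulVec_le P v
          have h0 := norm_nonneg (eucl v)
          nlinarith
      _ = spNorm P * ‖eucl v‖ ^ 2 := by ring
  have h5 : ‖eucl (K *ᵥ v)‖ ^ 2 ≤ spNorm P * ‖eucl v‖ ^ 2 := by linarith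
  have h6 : ‖eucl (K *ᵥ v)‖ ≤ Real.sqrt (spNorm P * ‖eucl v‖ ^ 2) := by
    rw [← Real.sqrt_sq (norm_nonneg (eucl (K *ᵥ v)))]
    exact Real.sqrt_le_sqrt h5
  calc ‖eucl (K *ᵥ v)‖ ≤ Real.sqrt (spNorm P * ‖eucl v‖ ^ 2) := h6
    _ = Real.sqrt (spNorm P) * ‖eucl v‖ := by
        rw [Real.sqrt_mul (spNorm_nonneg P), Real.sqrt_sq (norm_nonneg _)]

lemma mul3_bound {a b c d : ℕ} {X : Matrix (Fin a) (Fin b) ℝ} {Y : Matrix (Fin b) (Fin c) ℝ}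
    {Z : Matrix (Fin c) (Fin d) ℝ} {x y z : ℝ}
    (hX : spNorm X ≤ x) (hY : spNorm Y ≤ y) (hZ : spNorm Z ≤ z) :
    spNorm (X * Y * Z) ≤ x * y * z := by
  have h0 := spNorm_nonneg X; have h1 := spNorm_nonneg Y; have h2 := spNorm_nonneg Z
  calc spNorm (X * Y * Z) ≤ spNorm (X * Y) * spNorm Z := spNorm_mul_le _ _
    _ ≤ (spNorm X * spNorm Y) * spNorm Z :=
        mul_le_mul_of_nonneg_right (spNorm_mul_le X Y) h2
    _ ≤ x * y * z :=
        mul_le_mul (mul_le_mul hX hY h1 (h0.trans hX)) hZ h2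
          (mul_nonneg (h0.trans hX) (h1.trans hY))

lemma E_bound {n m k : ℕ} (Bh Bs : Matrix (Fin n) (Fin m) ℝ) (Fm Ps : Matrix (Fin n) (Fin n) ℝ)
    (C Cs : Matrix (Fin n) (Fin k) ℝ) {U εm ε : ℝ}
    (hU1 : 1 ≤ U) (hεm : 0 ≤ εm) (hε : 0 ≤ ε) (hUem : εm ≤ U) (hUε : ε ≤ U)
    (hBs : spNorm Bs ≤ U) (hPs : spNorm Ps ≤ U) (hCs : spNorm Cs ≤ U)
    (hBd : spNorm (Bh - Bs) ≤ εm) (hFd : spNorm (Fm - Ps) ≤ ε) (hCd : spNorm (C - Cs) ≤ εm) :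
    spNorm (Bhᵀ * Fm * C - Bsᵀ * Ps * Cs) ≤ U ^ 2 * (3 * εm + 4 * ε) := by
  have hF : spNorm Fm ≤ U + ε := by
    have : Fm = Ps + (Fm - Ps) := by abel
    rw [this]
    exact (spNorm_add_le _ _).trans (by linarith)
  have hC : spNorm C ≤ U + εm := by
    have : C = Cs + (C - Cs) := by abel
    rw [this]
    exact (spNorm_add_le _ _).trans (by linarith)
  have hdec : Bhᵀ * Fm * C - Bsᵀ * Ps * Cs =
      (Bh - Bs)ᵀ * Fm * C + (Bsᵀ * (Fm - Ps) * C + Bsᵀ * Ps * (C - Cs)) := by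
    simp only [Matrix.transpose_sub, Matrix.sub_mul, Matrix.mul_sub]
    abel
  rw [hdec]
  have t1 : spNorm ((Bh - Bs)ᵀ * Fm * C) ≤ εm * (U + ε) * (U + εm) :=
    mul3_bound (by rw [spNorm_transpose]; exact hBd) hF hC
  have t2 : spNorm (Bsᵀ * (Fm - Ps) * C) ≤ U * ε * (U + εm) :=
    mul3_bound (by rw [spNorm_transpose]; exact hBs) hFd hC
  have t3 : spNorm (Bsᵀ * Ps * (C - Cs)) ≤ U * U * εm :=
    mul3_bound (by rw [spNorm_transpose]; exact hBs) hPs hCd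
  have htri : spNorm ((Bh - Bs)ᵀ * Fm * C + (Bsᵀ * (Fm - Ps) * C + Bsᵀ * Ps * (C - Cs))) ≤
      spNorm ((Bh - Bs)ᵀ * Fm * C) + (spNorm (Bsᵀ * (Fm - Ps) * C) +
        spNorm (Bsᵀ * Ps * (C - Cs))) :=
    (spNorm_add_le _ _).trans (add_le_add_right (spNorm_add_le _ _) _)
  refine htri.trans ?_
  nlinarith [mul_nonneg (mul_nonneg (sub_nonneg.2 hUem) (by linarith : (0:ℝ) ≤ U)) hε,
    mul_nonneg (mul_nonneg (sub_nonneg.2 hUem) hεm) (by linarith : (0:ℝ) ≤ U),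
    mul_nonneg (mul_nonneg (sub_nonneg.2 hUem) (by linarith : (0:ℝ) ≤ U + εm)) hε]

end SpAux
end Aux


theorem stmt4 {n m : ℕ} (hn : 0 < n) (hm : 0 < m) (hmn : m ≤ n)
    (Astar Ahat : Matrix (Fin n) (Fin n) ℝ) (Bstar Bhat : Matrix (Fin n) (Fin m) ℝ)
    (R : Matrix (Fin m) (Fin m) ℝ) (Q Pstar F : Matrix (Fin n) (Fin n) ℝ)
    (U εm ε : ℝ)
    (hR : (R - 1).PosSemidef) (hQ : (Q - 1).PosSemidef)
    (hstab : Stabilizable Astar Bstar)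
    (hU1 : 1 ≤ U) (hUem : εm ≤ U)
    (hAb : spNorm Astar ≤ U) (hBb : spNorm Bstar ≤ U) (hPb : spNorm Pstar ≤ U)
    (hPstar : Pstar.PosDef) (hfix : Pstar = ric R Q Astar Bstar Pstar)
    (hεm : 0 ≤ εm) (hAm : spNorm (Ahat - Astar) ≤ εm) (hBm : spNorm (Bhat - Bstar) ≤ εm)
    (hF : F.PosSemidef) (hε : 0 ≤ ε) (hFP : spNorm (F - Pstar) ≤ ε)
    (hUε : ε ≤ U) :
    spNorm (gain R Ahat Bhat F - gain R Astar Bstar Pstar) ≤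
      U ^ 2 * (Real.sqrt (spNorm Pstar) + 1) * (3 * εm + 4 * ε) / minEig R := by
  classical
  haveI : NeZero m := ⟨hm.ne'⟩
  haveI : NeZero n := ⟨hn.ne'⟩
  open SpAux in
  have hc1 : 1 ≤ minEig R := SpAux.one_le_minEig hR
  have hc0 : 0 < minEig R := lt_of_lt_of_le one_pos hc1
  have hRh : R.IsHermitian := by
    have h : R = (R - 1) + 1 := by abel
    rw [h]; exact hR.isHermitian.add Matrix.isHermitian_one
  have hRt : Rᵀ = R := by rw [← SpAux.conjT_eq_transpose]; exact hRh
  have hPt : Pstarᵀ = Pstar := by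
    rw [← SpAux.conjT_eq_transpose]; exact hPstar.isHermitian
  have hRpd : R.PosDef := SpAux.posDef_of_shift one_pos (by rwa [one_smul])
  have hRdet : IsUnit R.det := (isUnit_iff_isUnit_det R).1 hRpd.isUnit
  have hPsPSD : Pstar.PosSemidef := hPstar.posSemidef
  have hBPB : (Bstarᵀ * Pstar * Bstar).PosSemidef := by
    have h := hPsPSD.conjTranspose_mul_mul_same Bstar
    rwa [SpAux.conjT_eq_transpose] at h
  have hMs_pd : (R + Bstarᵀ * Pstar * Bstar).PosDef :=
    Matrix.PosDef.add_posSemidef hRpd hBPB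
  have hMsdet : IsUnit (R + Bstarᵀ * Pstar * Bstar).det :=
    (isUnit_iff_isUnit_det _).1 hMs_pd.isUnit
  have hBFB : (Bhatᵀ * F * Bhat).PosSemidef := by
    have h := hF.conjTranspose_mul_mul_same Bhat
    rwa [SpAux.conjT_eq_transpose] at h
  have hMh_shift : ((R + Bhatᵀ * F * Bhat) - minEig R • 1).PosSemidef := by
    have h1 := (SpAux.shifted_psd hR).add hBFB
    have heq : R - minEig R • 1 + Bhatᵀ * F * Bhat
        = R + Bhatᵀ * F * Bhat - minEig R • 1 := by abel
    rwa [heq] at h1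
  have hMh_pd : (R + Bhatᵀ * F * Bhat).PosDef := SpAux.posDef_of_shift hc0 hMh_shift
  have hMhdet : IsUnit (R + Bhatᵀ * F * Bhat).det :=
    (isUnit_iff_isUnit_det _).1 hMh_pd.isUnit
  have hMhinv : spNorm (R + Bhatᵀ * F * Bhat)⁻¹ ≤ 1 / minEig R :=
    SpAux.spNorm_inv_le hc0 hMh_shift
  -- Lyapunov identity and the bound on ‖K★‖
  have hlyap := SpAux.lyap_id Astar Pstar Bstar R hPt hRt hRdet hMsdet
  rw [ric] at hfix
  have hfix' : Pstar =
      (Astar - Bstar * gain R Astar Bstar Pstar)ᵀ * Pstar *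
          (Astar - Bstar * gain R Astar Bstar Pstar) +
        (gain R Astar Bstar Pstar)ᵀ * R * gain R Astar Bstar Pstar + Q := by
    rw [← hlyap]; exact hfix
  have hQpsd : Q.PosSemidef := by
    have h : Q = (Q - 1) + 1 := by abel
    rw [h]; exact hQ.add Matrix.PosSemidef.one
  have hLP : ((Astar - Bstar * gain R Astar Bstar Pstar)ᵀ * Pstar *
      (Astar - Bstar * gain R Astar Bstar Pstar)).PosSemidef := by
    have h := hPsPSD.conjTranspose_mul_mul_same (Astar - Bstar * gain R Astar Bstar Pstar)
    rwa [SpAux.conjT_eq_transpose] at h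
  have hPSD : (Pstar -
      (gain R Astar Bstar Pstar)ᵀ * R * gain R Astar Bstar Pstar).PosSemidef := by
    have h := congrArg
      (fun Z => Z - (gain R Astar Bstar Pstar)ᵀ * R * gain R Astar Bstar Pstar) hfix'
    rw [h]
    have heq : (Astar - Bstar * gain R Astar Bstar Pstar)ᵀ * Pstar *
          (Astar - Bstar * gain R Astar Bstar Pstar) +
        (gain R Astar Bstar Pstar)ᵀ * R * gain R Astar Bstar Pstar + Q -
        (gain R Astar Bstar Pstar)ᵀ * R * gain R Astar Bstar Pstar =
        (Astar - Bstar * gain R Astar Bstar Pstar)ᵀ * Pstar *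
          (Astar - Bstar * gain R Astar Bstar Pstar) + Q := by abel
    rw [heq]
    exact hLP.add hQpsd
  have hKsb : spNorm (gain R Astar Bstar Pstar) ≤ Real.sqrt (spNorm Pstar) :=
    SpAux.gain_norm_le hR hPSD
  -- E bounds
  have hE1 : spNorm (Bhatᵀ * F * Ahat - Bstarᵀ * Pstar * Astar) ≤
      U ^ 2 * (3 * εm + 4 * ε) :=
    SpAux.E_bound Bhat Bstar F Pstar Ahat Astar hU1 hεm hε hUem hUε hBb hPb hAb hBm hFP hAm
  have hE2 : spNorm (Bhatᵀ * F * Bhat - Bstarᵀ * Pstar * Bstar) ≤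
      U ^ 2 * (3 * εm + 4 * ε) :=
    SpAux.E_bound Bhat Bstar F Pstar Bhat Bstar hU1 hεm hε hUem hUε hBb hPb hBb hBm hFP hBm
  -- decomposition
  have hMsK : Bstarᵀ * Pstar * Astar =
      (R + Bstarᵀ * Pstar * Bstar) * gain R Astar Bstar Pstar := by
    rw [gain, ← Matrix.mul_assoc, Matrix.mul_nonsing_inv _ hMsdet, Matrix.one_mul]
  have hz : (Bhatᵀ * F * Ahat - Bstarᵀ * Pstar * Astar) -
      (Bhatᵀ * F * Bhat - Bstarᵀ * Pstar * Bstar) * gain R Astar Bstar Pstar =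
      Bhatᵀ * F * Ahat - (R + Bhatᵀ * F * Bhat) * gain R Astar Bstar Pstar := by
    rw [hMsK]
    simp only [Matrix.sub_mul, Matrix.add_mul]
    abel
  have hdiff : gain R Ahat Bhat F - gain R Astar Bstar Pstar =
      (R + Bhatᵀ * F * Bhat)⁻¹ * ((Bhatᵀ * F * Ahat - Bstarᵀ * Pstar * Astar) -
        (Bhatᵀ * F * Bhat - Bstarᵀ * Pstar * Bstar) * gain R Astar Bstar Pstar) := by
    rw [hz, Matrix.mul_sub, ← Matrix.mul_assoc ((R + Bhatᵀ * F * Bhat)⁻¹)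
      (R + Bhatᵀ * F * Bhat) (gain R Astar Bstar Pstar),
      Matrix.nonsing_inv_mul _ hMhdet, Matrix.one_mul]
    simp only [gain]
  have hTnn : (0:ℝ) ≤ U ^ 2 * (3 * εm + 4 * ε) :=
    mul_nonneg (sq_nonneg U) (by linarith)
  have hZn : spNorm ((Bhatᵀ * F * Ahat - Bstarᵀ * Pstar * Astar) -
      (Bhatᵀ * F * Bhat - Bstarᵀ * Pstar * Bstar) * gain R Astar Bstar Pstar) ≤
      U ^ 2 * (3 * εm + 4 * ε) + U ^ 2 * (3 * εm + 4 * ε) * Real.sqrt (spNorm Pstar) := by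
    have h1 : spNorm ((Bhatᵀ * F * Bhat - Bstarᵀ * Pstar * Bstar) *
        gain R Astar Bstar Pstar) ≤ U ^ 2 * (3 * εm + 4 * ε) * Real.sqrt (spNorm Pstar) :=
      (SpAux.spNorm_mul_le _ _).trans
        (mul_le_mul hE2 hKsb (SpAux.spNorm_nonneg _) hTnn)
    exact (SpAux.spNorm_sub_le _ _).trans (by linarith)
  rw [hdiff]
  calc spNorm ((R + Bhatᵀ * F * Bhat)⁻¹ * ((Bhatᵀ * F * Ahat - Bstarᵀ * Pstar * Astar) -
        (Bhatᵀ * F * Bhat - Bstarᵀ * Pstar * Bstar) * gain R Astar Bstar Pstar)) ≤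
      spNorm (R + Bhatᵀ * F * Bhat)⁻¹ * spNorm ((Bhatᵀ * F * Ahat - Bstarᵀ * Pstar * Astar) -
        (Bhatᵀ * F * Bhat - Bstarᵀ * Pstar * Bstar) * gain R Astar Bstar Pstar) :=
      SpAux.spNorm_mul_le _ _
    _ ≤ (1 / minEig R) * (U ^ 2 * (3 * εm + 4 * ε) +
        U ^ 2 * (3 * εm + 4 * ε) * Real.sqrt (spNorm Pstar)) :=
      mul_le_mul hMhinv hZn (SpAux.spNorm_nonneg _) (one_div_pos.mpr hc0).le
    _ = U ^ 2 * (Real.sqrt (spNorm Pstar) + 1) * (3 * εm + 4 * ε) / minEig R := by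
      ring
end

section
/- Let R ≻ 0 and Q ⪰ 0, let (A★,B★) and (Â,B̂) be arbitrary pairs in ℝ^{n×n} × ℝ^{n×m}, and let P₁, P₂ ⪰ 0. For each integer i ≥ 0, set P̂_{(i)} := 𝓡^{(i)}_{Â,B̂}(P₁) and P_{(i)} := 𝓡^{(i)}_{A★,B★}(P₂). Then for every integer i ≥ 0: P̂_{(i)} − P_{(i)} = [Φ^{(0:i)}_{Â,B̂}(P₁)]ᵀ (P₁ − P₂) Φ̄^{(0:i)}(P₂) + Σ_{j=1}^{i} [Φ^{(i−j+1:i)}_{Â,B̂}(P₁)]ᵀ 𝓜(P̂_{(i−j)}, P_{(i−j)}) Φ̄^{(i−j+1:i)}(P₂). -/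
open Matrix

section AuxStmt6

lemma unit_det_one_add_mul {n : ℕ} {S P : Matrix (Fin n) (Fin n) ℝ}
    (hS : S.PosSemidef) (hP : P.PosSemidef) : IsUnit (1 + S * P).det := by
  rw [isUnit_iff_ne_zero]
  intro hdet
  obtain ⟨v, hv0, hv⟩ := (Matrix.exists_mulVec_eq_zero_iff).mpr hdet
  have hv' : v + S *ᵥ (P *ᵥ v) = 0 := by
    simpa [Matrix.add_mulVec, Matrix.one_mulVec, Matrix.mulVec_mulVec] using hv
  have key : v ⬝ᵥ (P *ᵥ v) + (P *ᵥ v) ⬝ᵥ (S *ᵥ (P *ᵥ v)) = 0 := by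
    have := congrArg (fun w => (P *ᵥ v) ⬝ᵥ w) hv'
    simpa [dotProduct_add, dotProduct_comm (P *ᵥ v) v] using this
  have h1 : 0 ≤ v ⬝ᵥ (P *ᵥ v) := by simpa using hP.dotProduct_mulVec_nonneg v
  have h2 : 0 ≤ (P *ᵥ v) ⬝ᵥ (S *ᵥ (P *ᵥ v)) := by simpa using hS.dotProduct_mulVec_nonneg (P *ᵥ v)
  have hz : v ⬝ᵥ (P *ᵥ v) = 0 := by linarith
  have hPv : P *ᵥ v = 0 := (hP.dotProduct_mulVec_zero_iff v).mp (by simpa using hz)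
  exact hv0 (by simpa [hPv] using hv')

lemma commute_inv {n : ℕ} (X T : Matrix (Fin n) (Fin n) ℝ)
    [Invertible (1 + X * T)] [Invertible (1 + T * X)] :
    X * (1 + T * X)⁻¹ = (1 + X * T)⁻¹ * X := by
  have e : (1 + X * T) * X = X * (1 + T * X) := by noncomm_ring
  have h : (1 + X * T) * (X * (1 + T * X)⁻¹) = X := by
    rw [← Matrix.mul_assoc, e, Matrix.mul_assoc, Matrix.mul_inv_of_invertible, Matrix.mul_one]
  calc X * (1 + T * X)⁻¹
      = (1 + X * T)⁻¹ * ((1 + X * T) * (X * (1 + T * X)⁻¹)) := by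
        rw [Matrix.inv_mul_cancel_left_of_invertible]
    _ = (1 + X * T)⁻¹ * X := by rw [h]

lemma core_identity {n : ℕ} (X Y S T : Matrix (Fin n) (Fin n) ℝ)
    [Invertible (1 + X * T)] [Invertible (1 + S * Y)] :
    (1 + X * T)⁻¹ * X =
      (1 + X * T)⁻¹ * (X - Y) * ((1 + (S - T) * Y) * (1 + S * Y)⁻¹)
      + Y * (1 + S * Y)⁻¹
      + (1 + X * T)⁻¹ * (Y * (S - T) * Y) * (1 + S * Y)⁻¹ := by
  have key : X * (1 + S * Y) = (X - Y) * (1 + (S - T) * Y) + (1 + X * T) * Y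
      + Y * (S - T) * Y := by noncomm_ring
  have h2 : (1 + X * T)⁻¹ * X
      = (1 + X * T)⁻¹ * (X * (1 + S * Y)) * (1 + S * Y)⁻¹ := by
    rw [Matrix.mul_assoc ((1 + X * T)⁻¹), Matrix.mul_assoc X, Matrix.mul_inv_of_invertible,
      Matrix.mul_one]
  rw [h2, key, Matrix.mul_add, Matrix.mul_add, Matrix.add_mul, Matrix.add_mul]
  congr 1
  congr 1
  · simp [Matrix.mul_assoc]
  · rw [Matrix.inv_mul_cancel_left_of_invertible]

lemma psd_mul_inv {n : ℕ} {S P : Matrix (Fin n) (Fin n) ℝ}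
    (hS : S.PosSemidef) (hP : P.PosSemidef) : (P * (1 + S * P)⁻¹).PosSemidef := by
  haveI := Matrix.invertibleOfIsUnitDet _ (unit_det_one_add_mul hS hP)
  haveI := Matrix.invertibleOfIsUnitDet _ (unit_det_one_add_mul hP hS)
  refine posSemidef_iff_dotProduct_mulVec.mpr ⟨?_, ?_⟩
  · have hcomm := commute_inv P S
    show (P * (1 + S * P)⁻¹)ᴴ = _
    rw [conjTranspose_mul, Matrix.conjTranspose_nonsing_inv]
    have h1 : (1 + S * P)ᴴ = 1 + P * S := by
      rw [conjTranspose_add, conjTranspose_mul, hP.1, hS.1, conjTranspose_one]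
    rw [h1, hP.1, ← hcomm]
  · intro x
    set y := (1 + S * P)⁻¹ *ᵥ x with hy
    have hx : x = y + S *ᵥ (P *ᵥ y) := by
      have h0 : (1 + S * P) *ᵥ y = x := by
        rw [hy, Matrix.mulVec_mulVec, Matrix.mul_inv_of_invertible, Matrix.one_mulVec]
      rw [← h0, Matrix.add_mulVec, Matrix.one_mulVec, ← Matrix.mulVec_mulVec]
    have hMx : (P * (1 + S * P)⁻¹) *ᵥ x = P *ᵥ y := by
      rw [← Matrix.mulVec_mulVec, ← hy]
    rw [star_trivial, hMx]
    calc (0:ℝ) ≤ y ⬝ᵥ (P *ᵥ y) + (P *ᵥ y) ⬝ᵥ (S *ᵥ (P *ᵥ y)) := by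
          have h3 := hP.dotProduct_mulVec_nonneg y
          have h4 := hS.dotProduct_mulVec_nonneg (P *ᵥ y)
          simp only [star_trivial] at h3 h4
          linarith
      _ = x ⬝ᵥ (P *ᵥ y) := by
          rw [hx, add_dotProduct, dotProduct_comm (S *ᵥ (P *ᵥ y))]

lemma sMat_psd {n m : ℕ} {R : Matrix (Fin m) (Fin m) ℝ} (hR : R.PosDef)
    (B : Matrix (Fin n) (Fin m) ℝ) : (sMat R B).PosSemidef := by
  have h := (hR.inv).posSemidef.mul_mul_conjTranspose_same B
  simpa [sMat, conjTranspose_eq_transpose_of_trivial] using h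

lemma ric_psd {n m : ℕ} {R : Matrix (Fin m) (Fin m) ℝ} {Q A : Matrix (Fin n) (Fin n) ℝ}
    {B : Matrix (Fin n) (Fin m) ℝ} {P : Matrix (Fin n) (Fin n) ℝ}
    (hR : R.PosDef) (hQ : Q.PosSemidef) (hP : P.PosSemidef) :
    (ric R Q A B P).PosSemidef := by
  have h1 := (psd_mul_inv (sMat_psd hR B) hP).conjTranspose_mul_mul_same A
  have h2 : Aᵀ * P * (1 + sMat R B * P)⁻¹ * A
      = Aᴴ * (P * (1 + sMat R B * P)⁻¹) * A := by
    rw [conjTranspose_eq_transpose_of_trivial]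
    noncomm_ring
  rw [ric, h2]
  exact h1.add hQ

lemma ricIter_psd {n m : ℕ} {R : Matrix (Fin m) (Fin m) ℝ} {Q A : Matrix (Fin n) (Fin n) ℝ}
    {B : Matrix (Fin n) (Fin m) ℝ} {P : Matrix (Fin n) (Fin n) ℝ}
    (hR : R.PosDef) (hQ : Q.PosSemidef) (hP : P.PosSemidef) (i : ℕ) :
    (ricIter R Q A B i P).PosSemidef := by
  induction i with
  | zero => exact hP
  | succ k ih => exact ric_psd hR hQ ih

lemma transpose_eq_of_psd {n : ℕ} {P : Matrix (Fin n) (Fin n) ℝ} (hP : P.PosSemidef) :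
    Pᵀ = P := by
  rw [← conjTranspose_eq_transpose_of_trivial]; exact hP.1

lemma one_step {n m : ℕ} (Astar Ahat : Matrix (Fin n) (Fin n) ℝ)
    (Bstar Bhat : Matrix (Fin n) (Fin m) ℝ)
    (R : Matrix (Fin m) (Fin m) ℝ) (Q X Y : Matrix (Fin n) (Fin n) ℝ)
    (hR : R.PosDef) (hX : X.PosSemidef) (hY : Y.PosSemidef) :
    ric R Q Ahat Bhat X - ric R Q Astar Bstar Y =
      (clMat R Ahat Bhat X)ᵀ * (X - Y) * lbarMat R Astar Bstar Ahat Bhat Y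
      + mMat R Astar Bstar Ahat Bhat X Y := by
  have hS := sMat_psd hR Bstar
  have hT := sMat_psd hR Bhat
  set S := sMat R Bstar with hSdef
  set T := sMat R Bhat with hTdef
  haveI := Matrix.invertibleOfIsUnitDet _ (unit_det_one_add_mul hT hX)
  haveI := Matrix.invertibleOfIsUnitDet _ (unit_det_one_add_mul hX hT)
  haveI := Matrix.invertibleOfIsUnitDet _ (unit_det_one_add_mul hS hY)
  have hcomm := commute_inv X T
  have hcore := core_identity X Y S T
  have ht : ((1 + T * X)⁻¹ * Ahat)ᵀ = Ahatᵀ * (1 + X * T)⁻¹ := by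
    rw [Matrix.transpose_mul, Matrix.transpose_nonsing_inv, Matrix.transpose_add,
      Matrix.transpose_mul, transpose_eq_of_psd hX, transpose_eq_of_psd hT,
      Matrix.transpose_one]
  have hin : (1 + S * Y)⁻¹ * (Ahat - Astar) + (1 + S * Y)⁻¹ * Astar
      = (1 + S * Y)⁻¹ * Ahat := by
    rw [← Matrix.mul_add, sub_add_cancel]
  simp only [ric, clMat, lbarMat, mMat, ← hSdef, ← hTdef]
  rw [ht, hin]
  rw [show Ahatᵀ * X * (1 + T * X)⁻¹ * Ahat = Ahatᵀ * (X * (1 + T * X)⁻¹) * Ahat from by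
    noncomm_ring, hcomm, hcore]
  noncomm_ring

lemma phiMat_succ {n m : ℕ} (R : Matrix (Fin m) (Fin m) ℝ)
    (Q A : Matrix (Fin n) (Fin n) ℝ) (B : Matrix (Fin n) (Fin m) ℝ)
    (P : Matrix (Fin n) (Fin n) ℝ) {j i : ℕ} (h : j ≤ i) :
    phiMat R Q A B P j (i + 1)
      = phiMat R Q A B P j i * clMat R A B (ricIter R Q A B i P) := by
  unfold phiMat
  rw [show i + 1 - j = (i - j) + 1 from by omega, List.range_succ, List.map_append,
    List.prod_append]
  simp [show j + (i - j) = i from by omega]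

lemma phiMat_self {n m : ℕ} (R : Matrix (Fin m) (Fin m) ℝ)
    (Q A : Matrix (Fin n) (Fin n) ℝ) (B : Matrix (Fin n) (Fin m) ℝ)
    (P : Matrix (Fin n) (Fin n) ℝ) (i : ℕ) : phiMat R Q A B P i i = 1 := by
  simp [phiMat]

lemma phibarMat_succ {n m : ℕ} (R : Matrix (Fin m) (Fin m) ℝ)
    (Q As : Matrix (Fin n) (Fin n) ℝ) (Bs : Matrix (Fin n) (Fin m) ℝ)
    (Ah : Matrix (Fin n) (Fin n) ℝ) (Bh : Matrix (Fin n) (Fin m) ℝ)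
    (P : Matrix (Fin n) (Fin n) ℝ) {j i : ℕ} (h : j ≤ i) :
    phibarMat R Q As Bs Ah Bh P j (i + 1)
      = phibarMat R Q As Bs Ah Bh P j i * lbarMat R As Bs Ah Bh (ricIter R Q As Bs i P) := by
  unfold phibarMat
  rw [show i + 1 - j = (i - j) + 1 from by omega, List.range_succ, List.map_append,
    List.prod_append]
  simp [show j + (i - j) = i from by omega]

lemma phibarMat_self {n m : ℕ} (R : Matrix (Fin m) (Fin m) ℝ)
    (Q As : Matrix (Fin n) (Fin n) ℝ) (Bs : Matrix (Fin n) (Fin m) ℝ)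
    (Ah : Matrix (Fin n) (Fin n) ℝ) (Bh : Matrix (Fin n) (Fin m) ℝ)
    (P : Matrix (Fin n) (Fin n) ℝ) (i : ℕ) : phibarMat R Q As Bs Ah Bh P i i = 1 := by
  simp [phibarMat]

lemma sum_Icc_one {M : Type*} [AddCommMonoid M] (f : ℕ → M) (i : ℕ) :
    ∑ j ∈ Finset.Icc 1 i, f j = ∑ k ∈ Finset.range i, f (k + 1) := by
  induction i with
  | zero => simp
  | succ k ih =>
      rw [Finset.sum_Icc_succ_top (by omega), ih, Finset.sum_range_succ]

end AuxStmt6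
theorem stmt6 {n m : ℕ} (hn : 0 < n) (hm : 0 < m)
    (Astar Ahat : Matrix (Fin n) (Fin n) ℝ) (Bstar Bhat : Matrix (Fin n) (Fin m) ℝ)
    (R : Matrix (Fin m) (Fin m) ℝ) (Q P1 P2 : Matrix (Fin n) (Fin n) ℝ)
    (hR : R.PosDef) (hQ : Q.PosSemidef)
    (hP1 : P1.PosSemidef) (hP2 : P2.PosSemidef) :
    ∀ i : ℕ,
      ricIter R Q Ahat Bhat i P1 - ricIter R Q Astar Bstar i P2 =
        (phiMat R Q Ahat Bhat P1 0 i)ᵀ * (P1 - P2) *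
            phibarMat R Q Astar Bstar Ahat Bhat P2 0 i +
          ∑ j ∈ Finset.Icc 1 i,
            (phiMat R Q Ahat Bhat P1 (i - j + 1) i)ᵀ *
              mMat R Astar Bstar Ahat Bhat (ricIter R Q Ahat Bhat (i - j) P1)
                (ricIter R Q Astar Bstar (i - j) P2) *
              phibarMat R Q Astar Bstar Ahat Bhat P2 (i - j + 1) i := by
  intro i
  induction i with
  | zero => simp [ricIter, phiMat_self, phibarMat_self]
  | succ i ih =>
      have step := one_step Astar Ahat Bstar Bhat R Q
        (ricIter R Q Ahat Bhat i P1) (ricIter R Q Astar Bstar i P2)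
        hR (ricIter_psd hR hQ hP1 i) (ricIter_psd hR hQ hP2 i)
      have hrec1 : ricIter R Q Ahat Bhat (i + 1) P1
          = ric R Q Ahat Bhat (ricIter R Q Ahat Bhat i P1) := by simp [ricIter]
      have hrec2 : ricIter R Q Astar Bstar (i + 1) P2
          = ric R Q Astar Bstar (ricIter R Q Astar Bstar i P2) := by simp [ricIter]
      rw [hrec1, hrec2, step, ih,
        phiMat_succ R Q Ahat Bhat P1 (Nat.zero_le i),
        phibarMat_succ R Q Astar Bstar Ahat Bhat P2 (Nat.zero_le i),
        sum_Icc_one, sum_Icc_one, Finset.sum_range_succ']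
      rw [Matrix.mul_add, Matrix.add_mul, Finset.mul_sum, Finset.sum_mul, add_assoc]
      refine congrArg₂ (· + ·) ?_ (congrArg₂ (· + ·) ?_ ?_)
      · simp [Matrix.transpose_mul, Matrix.mul_assoc]
      · refine Finset.sum_congr rfl (fun k hk => ?_)
        have hk' : k < i := Finset.mem_range.mp hk
        rw [show i + 1 - (k + 1 + 1) = i - (k + 1) from by omega]
        rw [phiMat_succ R Q Ahat Bhat P1 (show i - (k + 1) + 1 ≤ i from by omega),
          phibarMat_succ R Q Astar Bstar Ahat Bhat P2 (show i - (k + 1) + 1 ≤ i from by omega)]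
        simp [Matrix.transpose_mul, Matrix.mul_assoc]
      · simp [phiMat_self, phibarMat_self]
end

section
/- Let (A★,B★) satisfy Assumption (LQR) and Assumption (bound), and let P★ be a positive-definite matrix satisfying P★ = 𝓡_{A★,B★}(P★). If ε_m ≤ 1/(40 Υ★⁴ ‖P★‖²), β★ ε_p ≤ 1, and ε_m < 1/(8‖P★‖²), then γ₁(ε_m, ε_p) ≤ 1 and consequently γ₁(ε_m, ε_p) γ₂(ε_m) < 1. -/
open Matrix

section Helpers

open Matrix

lemma spec_iff_eig {k : ℕ} (M : Matrix (Fin k) (Fin k) ℝ) (μ : ℝ) :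
    μ ∈ spectrum ℝ M ↔ ∃ v : Fin k → ℝ, v ≠ 0 ∧ M *ᵥ v = μ • v := by
  constructor
  · intro h
    rw [spectrum.mem_iff, Matrix.isUnit_iff_isUnit_det, isUnit_iff_ne_zero, not_not] at h
    obtain ⟨v, hv, hv2⟩ := (Matrix.exists_mulVec_eq_zero_iff).2 h
    refine ⟨v, hv, ?_⟩
    rw [Algebra.algebraMap_eq_smul_one, Matrix.sub_mulVec, Matrix.smul_mulVec,
      Matrix.one_mulVec, sub_eq_zero] at hv2
    exact hv2.symm
  · rintro ⟨v, hv, hMv⟩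
    rw [spectrum.mem_iff, Matrix.isUnit_iff_isUnit_det, isUnit_iff_ne_zero, not_not,
      ← Matrix.exists_mulVec_eq_zero_iff]
    exact ⟨v, hv, by
      rw [Algebra.algebraMap_eq_smul_one, Matrix.sub_mulVec, Matrix.smul_mulVec,
        Matrix.one_mulVec, hMv, sub_self]⟩

lemma psd_spec_nonneg {k : ℕ} {M : Matrix (Fin k) (Fin k) ℝ} (hM : M.PosSemidef)
    {μ : ℝ} (h : μ ∈ spectrum ℝ M) : 0 ≤ μ := by
  obtain ⟨v, hv, hMv⟩ := (spec_iff_eig M μ).1 h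
  have h1 := hM.dotProduct_mulVec_nonneg v
  have hsv : star v = v := by
    funext i; simp
  rw [hMv, hsv] at h1
  have h2 : dotProduct v (μ • v) = μ * dotProduct v v := by
    unfold dotProduct
    rw [Finset.mul_sum]
    exact Finset.sum_congr rfl (fun i _ => by simp [mul_comm, mul_left_comm])
  rw [h2] at h1
  have hnn : (0:ℝ) ≤ dotProduct v v := by
    unfold dotProduct
    exact Finset.sum_nonneg fun i _ => mul_self_nonneg _
  have hvv : 0 < dotProduct v v := by
    rcases lt_or_eq_of_le hnn with h' | h'
    · exact h'
    · exact absurd (dotProduct_self_eq_zero.1 h'.symm) hv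
  nlinarith

lemma spec_abs_le {k : ℕ} (M : Matrix (Fin k) (Fin k) ℝ)
    {μ : ℝ} (h : μ ∈ spectrum ℝ M) : |μ| ≤ spNorm M := by
  obtain ⟨v, hv, hMv⟩ := (spec_iff_eig M μ).1 h
  set L := LinearMap.toContinuousLinearMap (Matrix.toEuclideanLin M) with hL
  set w : EuclideanSpace ℝ (Fin k) := (WithLp.equiv 2 (Fin k → ℝ)).symm v with hw
  have hw0 : w ≠ 0 := by
    simp only [hw, ne_eq]
    intro hcon
    apply hv
    have := congrArg (WithLp.equiv 2 (Fin k → ℝ)) hcon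
    simpa using this
  have hLw : L w = μ • w := by
    show Matrix.toEuclideanLin M w = μ • w
    rw [Matrix.toEuclideanLin_apply]
    simp only [hw, Equiv.apply_symm_apply, hMv]
    show WithLp.toLp 2 (M *ᵥ v) = μ • WithLp.toLp 2 v
    rw [hMv, WithLp.toLp_smul]
  have h1 : ‖L w‖ ≤ ‖L‖ * ‖w‖ := L.le_opNorm w
  rw [hLw, norm_smul] at h1
  have hwpos : 0 < ‖w‖ := norm_pos_iff.2 hw0
  have hmL : ‖μ‖ ≤ ‖L‖ := le_of_mul_le_mul_right h1 hwpos
  have hsp : spNorm M = ‖L‖ := by rw [spNorm, hL]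
  rw [hsp, ← Real.norm_eq_abs]
  exact hmL

lemma spec_bddAbove {k : ℕ} (M : Matrix (Fin k) (Fin k) ℝ) : BddAbove (spectrum ℝ M) :=
  ⟨spNorm M, fun _ hμ => (abs_le.1 (spec_abs_le M hμ)).2⟩

lemma spec_bddBelow {k : ℕ} (M : Matrix (Fin k) (Fin k) ℝ) : BddBelow (spectrum ℝ M) :=
  ⟨-spNorm M, fun _ hμ => (abs_le.1 (spec_abs_le M hμ)).1⟩

lemma spec_sub_smul {k : ℕ} (M : Matrix (Fin k) (Fin k) ℝ) (c μ : ℝ) :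
    μ ∈ spectrum ℝ M ↔ μ - c ∈ spectrum ℝ (M - c • 1) := by
  rw [spec_iff_eig, spec_iff_eig]
  constructor <;> rintro ⟨v, hv, hMv⟩ <;> refine ⟨v, hv, ?_⟩
  · rw [Matrix.sub_mulVec, Matrix.smul_mulVec, Matrix.one_mulVec, hMv, sub_smul]
  · rw [Matrix.sub_mulVec, Matrix.smul_mulVec, Matrix.one_mulVec, sub_smul] at hMv
    exact sub_left_inj.mp hMv

lemma smul_one_isHermitian {k : ℕ} (c : ℝ) :
    (c • (1 : Matrix (Fin k) (Fin k) ℝ)).IsHermitian := by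
  show (c • (1 : Matrix (Fin k) (Fin k) ℝ))ᴴ = _
  rw [Matrix.conjTranspose_smul, Matrix.conjTranspose_one, star_trivial]

end Helpers

set_option maxHeartbeats 1000000 in
theorem stmt16 {n m : ℕ} (hn : 0 < n) (hm : 0 < m) (hmn : m ≤ n)
    (Astar : Matrix (Fin n) (Fin n) ℝ) (Bstar : Matrix (Fin n) (Fin m) ℝ)
    (R : Matrix (Fin m) (Fin m) ℝ) (Q Pstar : Matrix (Fin n) (Fin n) ℝ)
    (U εm εp : ℝ)
    (hR : (R - 1).PosSemidef) (hQ : (Q - 1).PosSemidef)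
    (hstab : Stabilizable Astar Bstar)
    (hU1 : 1 ≤ U) (hUem : εm ≤ U)
    (hAb : spNorm Astar ≤ U) (hBb : spNorm Bstar ≤ U) (hPb : spNorm Pstar ≤ U)
    (hPstar : Pstar.PosDef) (hfix : Pstar = ric R Q Astar Bstar Pstar)
    (hεm : 0 ≤ εm) (hεp : 0 ≤ εp)
    (h1 : εm ≤ 1 / (40 * U ^ 4 * spNorm Pstar ^ 2))
    (h2 : betaStar Q Pstar * εp ≤ 1)
    (h3 : εm < 1 / (8 * spNorm Pstar ^ 2)) :
    gamma1F U (betaStar Q Pstar) εm εp ≤ 1 ∧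
    gamma1F U (betaStar Q Pstar) εm εp *
      gamma2F (spNorm Pstar) (betaStar Q Pstar) εm < 1 := by
  classical
  set p := spNorm Pstar with hpdef
  set b := betaStar Q Pstar with hbdef
  -- Hermitian-ness
  have hQherm : Q.IsHermitian := by
    have h := hQ.1.add (Matrix.isHermitian_one (n := Fin n) (α := ℝ))
    rwa [sub_add_cancel] at h
  -- 1 ≤ minEig Q
  have hQne : (spectrum ℝ Q).Nonempty :=
    ⟨hQherm.eigenvalues ⟨0, hn⟩, hQherm.eigenvalues_mem_spectrum_real ⟨0, hn⟩⟩
  have hPne : (spectrum ℝ Pstar).Nonempty :=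
    ⟨hPstar.1.eigenvalues ⟨0, hn⟩, hPstar.1.eigenvalues_mem_spectrum_real ⟨0, hn⟩⟩
  have hmq1 : 1 ≤ minEig Q := by
    apply le_csInf hQne
    intro μ hμ
    have h' := (spec_sub_smul Q 1 μ).1 hμ
    rw [one_smul] at h'
    linarith [psd_spec_nonneg hQ h']
  -- Pstar - Q is PSD
  have hRpd : R.PosDef := by
    have h := Matrix.PosDef.posSemidef_add hR (Matrix.PosDef.one (n := Fin m) (R := ℝ))
    rwa [sub_add_cancel] at h
  have hSpsd : (sMat R Bstar).PosSemidef := by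
    have h := (hRpd.inv.posSemidef).mul_mul_conjTranspose_same Bstar
    rwa [Matrix.conjTranspose_eq_transpose_of_trivial] at h
  have hPdet : IsUnit Pstar.det := hPstar.det_pos.ne'.isUnit
  have hNpd : (Pstar⁻¹ + sMat R Bstar).PosDef := hPstar.inv.add_posSemidef hSpsd
  have hfact : Pstar⁻¹ + sMat R Bstar = (1 + sMat R Bstar * Pstar) * Pstar⁻¹ := by
    rw [add_mul, one_mul, Matrix.mul_assoc, Matrix.mul_nonsing_inv _ hPdet, mul_one]
  have hM0 : Pstar * (1 + sMat R Bstar * Pstar)⁻¹ = (Pstar⁻¹ + sMat R Bstar)⁻¹ := by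
    rw [hfact, Matrix.mul_inv_rev, Matrix.nonsing_inv_nonsing_inv _ hPdet]
  have hM0psd : (Pstar * (1 + sMat R Bstar * Pstar)⁻¹).PosSemidef := by
    rw [hM0]; exact hNpd.inv.posSemidef
  have hPQ : (Pstar - Q).PosSemidef := by
    have h2 : Pstar - Q = Astarᵀ * (Pstar * (1 + sMat R Bstar * Pstar)⁻¹) * Astar := by
      conv_lhs => rw [hfix]
      rw [ric, add_sub_cancel_right, Matrix.mul_assoc Astarᵀ Pstar _]
    rw [h2]
    have h := hM0psd.conjTranspose_mul_mul_same Astar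
    rwa [Matrix.conjTranspose_eq_transpose_of_trivial] at h
  -- Q - (minEig Q) • 1 is PSD
  have hQc : (Q - minEig Q • 1).PosSemidef := by
    have hherm : (Q - minEig Q • 1).IsHermitian := hQherm.sub (smul_one_isHermitian _)
    refine hherm.posSemidef_iff_eigenvalues_nonneg.mpr (fun i => (?_ : (0:ℝ) ≤ hherm.eigenvalues i))
    have hmem := hherm.eigenvalues_mem_spectrum_real i
    have hmem2 : hherm.eigenvalues i + minEig Q ∈ spectrum ℝ Q := by
      rw [spec_sub_smul Q (minEig Q)]
      simpa using hmem
    have := csInf_le (spec_bddBelow Q) hmem2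
    have : minEig Q ≤ hherm.eigenvalues i + minEig Q := this
    linarith
  have hPc : (Pstar - minEig Q • 1).PosSemidef := by
    have h := hPQ.add hQc
    rwa [sub_add_sub_cancel] at h
  -- ordering of eigenvalue quantities
  obtain ⟨μ0, hμ0⟩ := hPne
  have hμ0c : minEig Q ≤ μ0 := by
    have := psd_spec_nonneg hPc ((spec_sub_smul Pstar (minEig Q) μ0).1 hμ0)
    linarith
  have hmaxc : minEig Q ≤ maxEig Pstar :=
    hμ0c.trans (le_csSup (spec_bddAbove Pstar) hμ0)
  have hmaxle : maxEig Pstar ≤ p :=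
    csSup_le ⟨μ0, hμ0⟩ (fun μ hμ => (abs_le.1 (spec_abs_le _ hμ)).2)
  have hp1 : (1:ℝ) ≤ p := le_trans (hmq1.trans hmaxc) hmaxle
  have hmq0 : (0:ℝ) < minEig Q := lt_of_lt_of_le one_pos hmq1
  have hb1 : (1:ℝ) ≤ b := by
    rw [hbdef, betaStar]; exact (one_le_div hmq0).2 hmaxc
  have hbp : b ≤ p := by
    rw [hbdef, betaStar]
    exact le_trans (div_le_self (by linarith) hmq1) hmaxle
  -- scalar estimates
  have hb0 : (0:ℝ) < b := lt_of_lt_of_le one_pos hb1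
  have hU0 : (0:ℝ) < U := lt_of_lt_of_le one_pos hU1
  have hp0 : (0:ℝ) < p := lt_of_lt_of_le one_pos hp1
  have hbεp : 0 ≤ b * εp := mul_nonneg hb0.le hεp
  have hpsi_nonneg : 0 ≤ psiF U b εm εp := by
    unfold psiF
    have h2 : 0 ≤ (εm + 2*U)^2 * (b*εp + U) :=
      mul_nonneg (sq_nonneg _) (by nlinarith)
    nlinarith
  have hU3 : (1:ℝ) ≤ U^3 := one_le_pow₀ hU1
  have hpsi_le : psiF U b εm εp ≤ 19 * U^3 * εm := by
    unfold psiF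
    have ha : (εm + 2*U)^2 ≤ 9*U^2 := by nlinarith
    have hb' : b*εp + U ≤ 2*U := by nlinarith
    have hprod : (εm + 2*U)^2 * (b*εp + U) ≤ 9*U^2 * (2*U) :=
      mul_le_mul ha hb' (add_nonneg hbεp hU0.le) (by positivity)
    nlinarith
  have h40 : (0:ℝ) < 40*U^4*p^2 := by positivity
  have hεm40 : εm * (40*U^4*p^2) ≤ 1 := by
    rw [← le_div_iff₀ h40]
    convert h1 using 2 <;> ring
  have hsb : Real.sqrt b ≤ b := by
    nlinarith [Real.sq_sqrt hb0.le, Real.sqrt_nonneg b, sq_nonneg (Real.sqrt b - 1)]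
  have e1 : Real.sqrt b * psiF U b εm εp ≤ p * (19*U^3*εm) :=
    mul_le_mul (le_trans hsb hbp) hpsi_le hpsi_nonneg hp0.le
  have e2 : Real.sqrt b * psiF U b εm εp * (2*b) ≤ (p*(19*U^3*εm)) * (2*p) := by
    apply mul_le_mul e1 (by linarith) (by linarith)
    positivity
  have e3 : (p*(19*U^3*εm)) * (2*p) ≤ 38/(40*U) := by
    have heq : (p*(19*U^3*εm))*(2*p) = (38/(40*U)) * (εm * (40*U^4*p^2)) := by
      field_simp; ring
    rw [heq]
    have h38 : (0:ℝ) ≤ 38/(40*U) := by positivity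
    calc (38/(40*U)) * (εm*(40*U^4*p^2)) ≤ (38/(40*U)) * 1 :=
          mul_le_mul_of_nonneg_left hεm40 h38
      _ = 38/(40*U) := mul_one _
  have e4 : 38/(40*U) ≤ 1 := by
    rw [div_le_one (by positivity)]; nlinarith
  have hkey : Real.sqrt b * psiF U b εm εp ≤ 1/(2*b) := by
    rw [le_div_iff₀ (by positivity : (0:ℝ) < 2*b)]
    calc Real.sqrt b * psiF U b εm εp * (2*b) ≤ (p*(19*U^3*εm)) * (2*p) := e2
      _ ≤ 38/(40*U) := e3
      _ ≤ 1 := e4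
  have hbinv : b⁻¹ = 2*(1/(2*b)) := by field_simp
  have hhalf : 1/(2*b) ≤ 1 := by
    rw [div_le_one (by positivity : (0:ℝ) < 2*b)]; linarith
  have hsqrt2 : Real.sqrt (1 - b⁻¹) ≤ 1 - 1/(2*b) := by
    have h0 : (0:ℝ) ≤ 1 - 1/(2*b) := by
      have : 1/(2*b) ≤ 1/2 := by
        rw [div_le_div_iff₀ (by positivity : (0:ℝ) < 2*b) (by norm_num : (0:ℝ) < 2)]
        linarith
      linarith
    have hle : 1 - b⁻¹ ≤ (1 - 1/(2*b))^2 := by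
      rw [hbinv]; nlinarith [sq_nonneg (1/(2*b))]
    calc Real.sqrt (1 - b⁻¹) ≤ Real.sqrt ((1 - 1/(2*b))^2) := Real.sqrt_le_sqrt hle
      _ = 1 - 1/(2*b) := Real.sqrt_sq h0
  have hg1 : gamma1F U b εm εp ≤ 1 := by
    unfold gamma1F
    linarith
  -- gamma2 < 1
  have h8 : (0:ℝ) < 8*p^2 := by positivity
  have ht0 : (0:ℝ) < 1 - 8*p^2*εm := by
    rw [lt_div_iff₀ h8] at h3
    nlinarith
  have halpha : (alphaF p εm)⁻¹ = (1 - 8*p^2*εm) ^ ((1:ℝ)/2) := by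
    unfold alphaF
    rw [Real.rpow_neg ht0.le, inv_inv]
  have hz : 0 < (alphaF p εm)⁻¹ * b⁻¹ := by
    rw [halpha]
    exact mul_pos (Real.rpow_pos_of_pos ht0 _) (inv_pos.2 hb0)
  have hg2 : gamma2F p b εm < 1 := by
    unfold gamma2F
    rw [Real.sqrt_lt' one_pos]
    nlinarith
  exact ⟨hg1, lt_of_le_of_lt (mul_le_of_le_one_left (Real.sqrt_nonneg _) hg1) hg2⟩
end
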